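/- arXiv:1203.4611 — 6 statements merged into one kernel-verified Lean document; each statement's English description precedes it below -/
import Mathlib

section
/- If n and r are positive integers with n ≥ r+1 and nr is even, then there exists an r-regular simple graph on n vertices. -/
open SimpleGraph Finset
open scoped Classical

lemma circ_regular (n r : ℕ) [NeZero n] (hr : 0 < r) (hnr : r + 1 ≤ n)
    (he : Even (n * r)) :
    ∃ G : SimpleGraph (ZMod n), G.IsRegularOfDegree r := by
  have hn : 0 < n := Nat.pos_of_ne_zero (NeZero.ne n)
  set J : Finset ℕ :=
    (Finset.Icc 1 (r / 2)) ∪ (Finset.Icc 1 (r / 2)).image (n - ·) ∪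
      (if Odd r then {n / 2} else ∅) with hJdef
  have hnev : Odd r → n % 2 = 0 := by
    intro hor
    have h2 := Nat.odd_iff.mp hor
    rcases Nat.even_mul.mp he with h | h
    · exact Nat.even_iff.mp h
    · have := Nat.even_iff.mp h; omega
  have hmem : ∀ k, k ∈ J ↔ (1 ≤ k ∧ k ≤ r / 2) ∨ (∃ j, 1 ≤ j ∧ j ≤ r / 2 ∧ k = n - j) ∨
      (Odd r ∧ k = n / 2) := by
    intro k
    simp only [hJdef, Finset.mem_union, Finset.mem_image, Finset.mem_Icc]
    split_ifs with hor
    · simp only [Finset.mem_singleton]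
      constructor
      · rintro ((h | ⟨j, ⟨h1, h2⟩, h3⟩) | h)
        exacts [Or.inl h, Or.inr (Or.inl ⟨j, h1, h2, h3.symm⟩), Or.inr (Or.inr ⟨hor, h⟩)]
      · rintro (h | ⟨j, h1, h2, h3⟩ | ⟨_, h⟩)
        exacts [Or.inl (Or.inl h), Or.inl (Or.inr ⟨j, ⟨h1, h2⟩, h3.symm⟩), Or.inr h]
    · simp only [Finset.notMem_empty, or_false]
      constructor
      · rintro (h | ⟨j, ⟨h1, h2⟩, h3⟩)
        exacts [Or.inl h, Or.inr (Or.inl ⟨j, h1, h2, h3.symm⟩)]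
      · rintro (h | ⟨j, h1, h2, h3⟩ | ⟨ho, _⟩)
        exacts [Or.inl h, Or.inr ⟨j, ⟨h1, h2⟩, h3.symm⟩, absurd ho hor]
  have hJbound : ∀ k ∈ J, 1 ≤ k ∧ k < n := by
    intro k hk
    rcases (hmem k).mp hk with ⟨h1, h2⟩ | ⟨j, h1, h2, h3⟩ | ⟨ho, h2⟩ <;>
      [skip; skip; (have := hnev ho; have := Nat.odd_iff.mp ho)] <;> omega
  have hJsym : ∀ k ∈ J, n - k ∈ J := by
    intro k hk
    rw [hmem]
    rcases (hmem k).mp hk with ⟨h1, h2⟩ | ⟨j, h1, h2, h3⟩ | ⟨ho, h2⟩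
    · exact Or.inr (Or.inl ⟨k, h1, h2, rfl⟩)
    · exact Or.inl (by omega)
    · exact Or.inr (Or.inr ⟨ho, by have := hnev ho; omega⟩)
  have hJcard : J.card = r := by
    have hA : (Finset.Icc 1 (r / 2)).card = r / 2 := by
      rw [Nat.card_Icc]; omega
    have hB : ((Finset.Icc 1 (r / 2)).image (n - ·)).card = r / 2 := by
      rw [Finset.card_image_of_injOn, hA]
      intro a ha b hb hab
      simp only [Finset.mem_coe, Finset.mem_Icc] at ha hb
      have hab' : n - a = n - b := hab
      omega
    have hdisjAB : Disjoint (Finset.Icc 1 (r / 2)) ((Finset.Icc 1 (r / 2)).image (n - ·)) := by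
      rw [Finset.disjoint_left]
      intro a ha hb
      simp only [Finset.mem_Icc] at ha
      simp only [Finset.mem_image, Finset.mem_Icc] at hb
      obtain ⟨j, hj, hja⟩ := hb
      omega
    rw [hJdef]
    by_cases hor : Odd r
    · have hnev' := hnev hor
      have hr2 : r % 2 = 1 := Nat.odd_iff.mp hor
      rw [if_pos hor, Finset.card_union_of_disjoint, Finset.card_union_of_disjoint hdisjAB,
        hA, hB, Finset.card_singleton]
      · omega
      · rw [Finset.disjoint_left]
        intro a ha hb
        simp only [Finset.mem_singleton] at hb
        simp only [Finset.mem_union, Finset.mem_Icc, Finset.mem_image] at ha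
        rcases ha with h | ⟨j, hj, hja⟩ <;> omega
    · have hr2 : r % 2 = 0 := by rw [Nat.odd_iff] at hor; omega
      rw [if_neg hor, Finset.union_empty, Finset.card_union_of_disjoint hdisjAB, hA, hB]
      omega
  set G : SimpleGraph (ZMod n) := SimpleGraph.fromRel (fun u v => (v - u).val ∈ J) with hGdef
  refine ⟨G, ?_⟩
  have hadj : ∀ u v : ZMod n, G.Adj u v ↔ (v - u).val ∈ J := by
    intro u v
    simp only [hGdef, fromRel_adj]
    constructor
    · rintro ⟨hne, h | h⟩
      · exact h
      · have hvu : u - v ≠ 0 := sub_ne_zero_of_ne hne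
        have heq : (v - u) = -(u - v) := by ring
        rw [heq, ZMod.neg_val, if_neg hvu]
        exact hJsym _ h
    · intro h
      have hne : u ≠ v := by
        rintro rfl
        simp only [sub_self, ZMod.val_zero] at h
        exact absurd (hJbound 0 h).1 (by omega)
      exact ⟨hne, Or.inl h⟩
  intro v
  rw [← card_neighborFinset_eq_degree, ← hJcard]
  apply Finset.card_bij (fun w _ => (w - v).val)
  · intro w hw
    rw [mem_neighborFinset, hadj] at hw
    exact hw
  · intro a ha b hb hab
    have h1 : a - v = b - v := ZMod.val_injective n hab
    have := congrArg (· + v) h1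
    simpa using this
  · intro k hk
    refine ⟨v + (k : ZMod n), ?_, ?_⟩
    · rw [mem_neighborFinset, hadj]
      simpa [ZMod.val_natCast, Nat.mod_eq_of_lt (hJbound k hk).2] using hk
    · simp [ZMod.val_natCast, Nat.mod_eq_of_lt (hJbound k hk).2]

/-- If n and r are positive integers with n ≥ r+1 and nr is even,
then there exists an r-regular simple graph on n vertices. -/
theorem stmt0 (n r : ℕ) (hn : 0 < n) (hr : 0 < r) (hnr : r + 1 ≤ n)
    (he : Even (n * r)) :
    ∃ G : SimpleGraph (Fin n), G.IsRegularOfDegree r := by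
  obtain ⟨m, rfl⟩ := Nat.exists_eq_succ_of_ne_zero hn.ne'
  exact circ_regular (m + 1) r hr hnr he
end

section
/- If r and n are both such that n ≥ r+2 and n and r are both odd, then the sequence consisting of n-1 copies of r together with one copy of r-1 is graphic. -/
open SimpleGraph
open scoped Classical

/-- A sequence of nonnegative integers is graphic if it is the degree sequence
of some simple graph. -/
def IsGraphic {n : ℕ} (d : Fin n → ℕ) : Prop :=
  ∃ G : SimpleGraph (Fin n), ∀ v, G.degree v = d v

namespace Stmt1Aux

def deltaF {n : ℕ} (u v : Fin n) : ℕ := (v.val + n - u.val) % n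

lemma mod_two_cases {x n : ℕ} (hn : 0 < n) (h : x < 2 * n) :
    x % n = if x < n then x else x - n := by
  split_ifs with h'
  · exact Nat.mod_eq_of_lt h'
  · rw [Nat.mod_eq_sub_mod (le_of_not_gt h'), Nat.mod_eq_of_lt] ; omega

lemma deltaF_eq {n : ℕ} (u v : Fin n) :
    deltaF u v = if u.val ≤ v.val then v.val - u.val else v.val + n - u.val := by
  have hu := u.isLt; have hv := v.isLt
  unfold deltaF
  rw [mod_two_cases (by omega) (by omega)]
  split_ifs <;> omega

def addF {n : ℕ} (u : Fin n) (j : ℕ) : Fin n :=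
  ⟨(u.val + j) % n, Nat.mod_lt _ (by have := u.isLt; omega)⟩

lemma addF_val {n : ℕ} (u : Fin n) (j : ℕ) (hj : j < n) :
    (addF u j).val = if u.val + j < n then u.val + j else u.val + j - n := by
  have hu := u.isLt
  show (u.val + j) % n = _
  rw [mod_two_cases (by omega) (by omega)]

lemma deltaF_addF {n : ℕ} (u : Fin n) (j : ℕ) (hj : j < n) :
    deltaF u (addF u j) = j := by
  have hu := u.isLt
  rw [deltaF_eq, addF_val u j hj]
  split_ifs <;> omega

lemma addF_deltaF {n : ℕ} (u v : Fin n) : addF u (deltaF u v) = v := by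
  have hu := u.isLt; have hv := v.isLt
  have hd : deltaF u v < n := by rw [deltaF_eq]; split_ifs <;> omega
  apply Fin.ext
  rw [addF_val u _ hd, deltaF_eq]
  split_ifs <;> omega

def myAdj (m k : ℕ) (u v : Fin (2*m+1)) : Prop :=
  (1 ≤ deltaF u v ∧ deltaF u v ≤ k) ∨ (1 ≤ deltaF v u ∧ deltaF v u ≤ k) ∨
  (u.val + m = v.val ∧ u.val < m) ∨ (v.val + m = u.val ∧ v.val < m)

def G (m k : ℕ) : SimpleGraph (Fin (2*m+1)) where
  Adj := myAdj m k
  symm := by constructor; intro u v h; unfold myAdj at *; tauto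
  loopless := by
    constructor; intro v h
    have hd : deltaF v v = 0 := by rw [deltaF_eq]; simp
    unfold myAdj at h
    rw [hd] at h
    rcases h with ⟨h1,h2⟩|⟨h1,h2⟩|⟨h1,h2⟩|⟨h1,h2⟩ <;> omega

def T (m k : ℕ) (v : Fin (2*m+1)) : Finset ℕ :=
  (Finset.Icc 1 k ∪ Finset.Icc (2*m+1-k) (2*m)) ∪
  (if v.val < m then ({m} : Finset ℕ) else if v.val = 2*m then ∅ else {m+1})

lemma mem_T_lt (m k : ℕ) (hmk : k + 1 ≤ m) {v : Fin (2*m+1)} {j : ℕ}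
    (hj : j ∈ T m k v) : j < 2*m+1 := by
  simp only [T, Finset.mem_union] at hj
  split_ifs at hj <;>
    simp only [Finset.mem_Icc, Finset.mem_singleton, Finset.notMem_empty, or_false,
      false_or] at hj <;>
    casesm* _ ∨ _ <;> omega

lemma nbr_eq (m k : ℕ) (hmk : k + 1 ≤ m) (v : Fin (2*m+1)) :
    (G m k).neighborFinset v = (T m k v).image (addF v) := by
  ext x
  rw [SimpleGraph.mem_neighborFinset, Finset.mem_image]
  constructor
  · intro h
    rcases (h : myAdj m k v x) with ⟨h1,h2⟩|⟨h1,h2⟩|⟨h1,h2⟩|⟨h1,h2⟩ <;>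
    · refine ⟨deltaF v x, ?_, addF_deltaF v x⟩
      have e1 := deltaF_eq v x
      have e2 := deltaF_eq x v
      have hv := v.isLt; have hx := x.isLt
      simp only [T, Finset.mem_union]
      split_ifs at e1 e2 ⊢ <;>
        simp only [Finset.mem_Icc, Finset.mem_singleton, Finset.notMem_empty] <;> omega
  · rintro ⟨j, hj, rfl⟩
    have hjb : j < 2*m+1 := mem_T_lt m k hmk hj
    have hd : deltaF v (addF v j) = j := deltaF_addF v j hjb
    show myAdj m k v (addF v j)
    have e1 := deltaF_eq v (addF v j)
    have e2 := deltaF_eq (addF v j) v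
    have hv := v.isLt; have hx := (addF v j).isLt
    rw [hd] at e1
    unfold myAdj
    rw [hd]
    simp only [T, Finset.mem_union] at hj
    split_ifs at e1 e2 hj <;>
      simp only [Finset.mem_Icc, Finset.mem_singleton, Finset.notMem_empty, or_false,
        false_or] at hj <;>
      casesm* _ ∨ _ <;> omega

lemma card_T (m k : ℕ) (hmk : k + 1 ≤ m) (v : Fin (2*m+1)) :
    (T m k v).card = if v.val < 2*m then 2*k+1 else 2*k := by
  have hv := v.isLt
  unfold T
  have hAB : Disjoint (Finset.Icc 1 k) (Finset.Icc (2*m+1-k) (2*m)) := by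
    rw [Finset.disjoint_left]
    intro a ha hb
    simp only [Finset.mem_Icc] at ha hb
    omega
  have hM : Disjoint (Finset.Icc 1 k ∪ Finset.Icc (2*m+1-k) (2*m))
      (if v.val < m then ({m} : Finset ℕ) else if v.val = 2*m then ∅ else {m+1}) := by
    rw [Finset.disjoint_left]
    intro a ha hb
    simp only [Finset.mem_union, Finset.mem_Icc] at ha
    split_ifs at hb <;>
      simp only [Finset.mem_singleton, Finset.notMem_empty] at hb <;> omega
  rw [Finset.card_union_of_disjoint hM, Finset.card_union_of_disjoint hAB,
    Nat.card_Icc, Nat.card_Icc]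
  split_ifs <;> simp <;> omega

lemma degree_G (m k : ℕ) (hmk : k + 1 ≤ m) (v : Fin (2*m+1)) :
    (G m k).degree v = if v.val < 2*m then 2*k+1 else 2*k := by
  rw [← SimpleGraph.card_neighborFinset_eq_degree, nbr_eq m k hmk v,
    Finset.card_image_of_injOn, card_T m k hmk v]
  intro a ha b hb hab
  rw [← deltaF_addF v a (mem_T_lt m k hmk ha), hab, deltaF_addF v b (mem_T_lt m k hmk hb)]

end Stmt1Aux

/-- If n ≥ r+2 and n and r are both odd, then the sequence
consisting of n-1 copies of r together with one copy of r-1 is graphic. -/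
theorem stmt1 (n r : ℕ) (hn : Odd n) (hr : Odd r) (h : r + 2 ≤ n) :
    IsGraphic (fun i : Fin n => if (i : ℕ) < n - 1 then r else r - 1) := by
  obtain ⟨m, rfl⟩ : ∃ m, n = 2*m+1 := by obtain ⟨c, hc⟩ := hn; exact ⟨c, by omega⟩
  obtain ⟨k, rfl⟩ : ∃ k, r = 2*k+1 := by obtain ⟨c, hc⟩ := hr; exact ⟨c, by omega⟩
  have hmk : k + 1 ≤ m := by omega
  refine ⟨Stmt1Aux.G m k, fun v => ?_⟩
  rw [Stmt1Aux.degree_G m k hmk v]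
  show (if (v:ℕ) < 2*m then 2*k+1 else 2*k) =
    if (v:ℕ) < 2*m+1-1 then 2*k+1 else 2*k+1-1
  have hv := v.isLt
  split_ifs <;> omega
end

section
/- If π is a nonincreasing graphic sequence that is potentially K_r ∨ \overline{K_s}-graphic, then there is a realization of π in which the r vertices of the copy of K_r are the r vertices of highest degree and the s vertices of the copy of \overline{K_s} are the next s vertices of highest degree. -/
open SimpleGraph
open scoped Classical

/-- The split graph `K_r ∨ K̄_s`: the join of a complete graph on `r` vertices
(the first `r` coordinates) with an edgeless graph on `s` vertices. -/
def splitGraph (r s : ℕ) : SimpleGraph (Fin (r + s)) :=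
  SimpleGraph.fromRel (fun a _ => (a : ℕ) < r)

/-- A realization of the sequence `d` containing a copy of `H` as a subgraph. -/
def Potentially {k n : ℕ} (H : SimpleGraph (Fin k)) (d : Fin n → ℕ) : Prop :=
  ∃ G : SimpleGraph (Fin n), (∀ v, G.degree v = d v) ∧
    ∃ f : H →g G, Function.Injective f

set_option linter.unusedSectionVars false


variable {V : Type*} [Fintype V] [DecidableEq V]

/-- unordered pair equality predicate -/
def pr (u v p q : V) : Prop := (u = p ∧ v = q) ∨ (u = q ∧ v = p)

lemma pr_comm {u v p q : V} : pr v u p q ↔ pr u v p q := by unfold pr; tauto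

def switchGraph (G : SimpleGraph V) (a y b x : V) : SimpleGraph V :=
  SimpleGraph.fromRel (fun u v =>
    (G.Adj u v ∧ ¬ pr u v a y ∧ ¬ pr u v b x) ∨ pr u v a x ∨ pr u v b y)

variable {G : SimpleGraph V} {a y b x : V}

structure SwitchHyp (G : SimpleGraph V) (a y b x : V) : Prop where
  hab : a ≠ b
  hay : G.Adj a y
  hbx : G.Adj b x
  hax : ¬ G.Adj a x
  hby : ¬ G.Adj b y
  hxa : x ≠ a
  hyb : y ≠ b

lemma SwitchHyp.distinct (h : SwitchHyp G a y b x) :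
    a ≠ b ∧ a ≠ x ∧ a ≠ y ∧ b ≠ x ∧ b ≠ y ∧ x ≠ y := by
  refine ⟨h.hab, fun e => h.hxa e.symm, fun e => G.loopless.irrefl a (e ▸ h.hay),
    fun e => G.loopless.irrefl b (e ▸ h.hbx), fun e => h.hyb e.symm, fun e => ?_⟩
  exact h.hax (e ▸ h.hay)

lemma switch_adj (h : SwitchHyp G a y b x) {u v : V} :
    (switchGraph G a y b x).Adj u v ↔
      ((G.Adj u v ∧ ¬ pr u v a y ∧ ¬ pr u v b x) ∨ pr u v a x ∨ pr u v b y) := by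
  obtain ⟨h1, h2, h3, h4, h5, h6⟩ := h.distinct
  constructor
  · rintro ⟨hne, hr | hr⟩
    · exact hr
    · rcases hr with ⟨hG', hp1, hp2⟩ | hp | hp
      · exact Or.inl ⟨hG'.symm, fun c => hp1 (pr_comm.2 c), fun c => hp2 (pr_comm.2 c)⟩
      · exact Or.inr (Or.inl (pr_comm.1 hp))
      · exact Or.inr (Or.inr (pr_comm.1 hp))
  · intro hr
    have hne : u ≠ v := by
      rcases hr with ⟨hG', _⟩ | hp | hp
      · exact hG'.ne
      · unfold pr at hp; rintro rfl; rcases hp with ⟨rfl, rfl⟩ | ⟨rfl, rfl⟩ <;> simp_all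
      · unfold pr at hp; rintro rfl; rcases hp with ⟨rfl, rfl⟩ | ⟨rfl, rfl⟩ <;> simp_all
    exact ⟨hne, Or.inl hr⟩


lemma pr_self_left {u v p : V} (h : u ≠ p) : pr u v u p ↔ v = p := by
  unfold pr; constructor
  · rintro (⟨_, e⟩ | ⟨e, _⟩); exact e; exact absurd e h
  · intro e; exact Or.inl ⟨rfl, e⟩

lemma pr_self_right {u v p : V} (h : u ≠ p) : pr u v p u ↔ v = p := by
  unfold pr; constructor
  · rintro (⟨e, _⟩ | ⟨_, e⟩); exact absurd e h; exact e
  · intro e; exact Or.inr ⟨rfl, e⟩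

lemma pr_none {u v p q : V} (hp : u ≠ p) (hq : u ≠ q) : pr u v p q ↔ False := by
  unfold pr; constructor
  · rintro (⟨e, _⟩ | ⟨e, _⟩); exact hp e; exact hq e
  · exact False.elim

open Finset in
lemma switch_nf_a (h : SwitchHyp G a y b x) :
    (switchGraph G a y b x).neighborFinset a = insert x ((G.neighborFinset a).erase y) := by
  obtain ⟨h1, h2, h3, h4, h5, h6⟩ := h.distinct
  ext z
  simp only [mem_neighborFinset, switch_adj h, mem_insert, mem_erase,
    pr_self_left h3, pr_none h1 h2, pr_self_left h2, pr_none h1 h3]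
  tauto

open Finset in
lemma switch_nf_b (h : SwitchHyp G a y b x) :
    (switchGraph G a y b x).neighborFinset b = insert y ((G.neighborFinset b).erase x) := by
  obtain ⟨h1, h2, h3, h4, h5, h6⟩ := h.distinct
  ext z
  simp only [mem_neighborFinset, switch_adj h, mem_insert, mem_erase,
    pr_none h1.symm h5, pr_self_left h4, pr_none h1.symm h4, pr_self_left h5]
  tauto

open Finset in
lemma switch_nf_x (h : SwitchHyp G a y b x) :
    (switchGraph G a y b x).neighborFinset x = insert a ((G.neighborFinset x).erase b) := by
  obtain ⟨h1, h2, h3, h4, h5, h6⟩ := h.distinct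
  ext z
  simp only [mem_neighborFinset, switch_adj h, mem_insert, mem_erase,
    pr_none h2.symm h6, pr_self_right h4.symm, pr_self_right h2.symm, pr_none h4.symm h6]
  tauto

open Finset in
lemma switch_nf_y (h : SwitchHyp G a y b x) :
    (switchGraph G a y b x).neighborFinset y = insert b ((G.neighborFinset y).erase a) := by
  obtain ⟨h1, h2, h3, h4, h5, h6⟩ := h.distinct
  ext z
  simp only [mem_neighborFinset, switch_adj h, mem_insert, mem_erase,
    pr_self_right h3.symm, pr_none h5.symm h6.symm, pr_none h3.symm h6.symm, pr_self_right h5.symm]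
  tauto

open Finset in
lemma switch_nf_other (h : SwitchHyp G a y b x) {v : V}
    (hva : v ≠ a) (hvb : v ≠ b) (hvx : v ≠ x) (hvy : v ≠ y) :
    (switchGraph G a y b x).neighborFinset v = G.neighborFinset v := by
  ext z
  simp only [mem_neighborFinset, switch_adj h,
    pr_none hva hvy, pr_none hvb hvx, pr_none hva hvx, pr_none hvb hvy]
  tauto

open Finset in
lemma switch_degree (h : SwitchHyp G a y b x) (v : V) :
    (switchGraph G a y b x).degree v = G.degree v := by
  obtain ⟨h1, h2, h3, h4, h5, h6⟩ := h.distinct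
  by_cases hva : v = a
  · subst hva
    rw [degree, degree, switch_nf_a h,
      Finset.card_insert_of_notMem (by
        simp only [Finset.mem_erase, mem_neighborFinset]
        rintro ⟨-, c⟩; exact h.hax c),
      Finset.card_erase_of_mem (by simpa using h.hay)]
    have : 0 < (G.neighborFinset v).card := Finset.card_pos.2 ⟨y, by simpa using h.hay⟩
    omega
  by_cases hvb : v = b
  · subst hvb
    rw [degree, degree, switch_nf_b h,
      Finset.card_insert_of_notMem (by
        simp only [Finset.mem_erase, mem_neighborFinset]
        rintro ⟨-, c⟩; exact h.hby c),
      Finset.card_erase_of_mem (by simpa using h.hbx)]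
    have : 0 < (G.neighborFinset v).card := Finset.card_pos.2 ⟨x, by simpa using h.hbx⟩
    omega
  by_cases hvx : v = x
  · subst hvx
    rw [degree, degree, switch_nf_x h,
      Finset.card_insert_of_notMem (by
        simp only [Finset.mem_erase, mem_neighborFinset]
        rintro ⟨-, c⟩; exact h.hax c.symm),
      Finset.card_erase_of_mem (by simpa using h.hbx.symm)]
    have : 0 < (G.neighborFinset v).card := Finset.card_pos.2 ⟨b, by simpa using h.hbx.symm⟩
    omega
  by_cases hvy : v = y
  · subst hvy
    rw [degree, degree, switch_nf_y h,
      Finset.card_insert_of_notMem (by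
        simp only [Finset.mem_erase, mem_neighborFinset]
        rintro ⟨-, c⟩; exact h.hby c.symm),
      Finset.card_erase_of_mem (by simpa using h.hay.symm)]
    have : 0 < (G.neighborFinset v).card := Finset.card_pos.2 ⟨a, by simpa using h.hay.symm⟩
    omega
  · rw [degree, degree, switch_nf_other h hva hvb hvx hvy]

open Finset in
lemma switch_adj_a' (h : SwitchHyp G a y b x) (z : V) :
    (switchGraph G a y b x).Adj a z ↔ (z = x ∨ (z ≠ y ∧ G.Adj a z)) := by
  rw [← mem_neighborFinset, switch_nf_a h]
  simp [mem_neighborFinset]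

open Finset in
lemma switch_adj_b' (h : SwitchHyp G a y b x) (z : V) :
    (switchGraph G a y b x).Adj b z ↔ (z = y ∨ (z ≠ x ∧ G.Adj b z)) := by
  rw [← mem_neighborFinset, switch_nf_b h]
  simp [mem_neighborFinset]

lemma switch_adj_notab (h : SwitchHyp G a y b x) {u v : V}
    (hua : u ≠ a) (hub : u ≠ b) (hva : v ≠ a) (hvb : v ≠ b) :
    (switchGraph G a y b x).Adj u v ↔ G.Adj u v := by
  rw [switch_adj h]
  unfold pr
  constructor
  · rintro (⟨hG', _, _⟩ | hp | hp) <;> tauto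
  · intro hz; exact Or.inl ⟨hz, by tauto, by tauto⟩

open Finset in
lemma absorb : ∀ (m : ℕ) (G : SimpleGraph V) (a b : V) (S X : Finset V),
    S.card ≤ m →
    a ≠ b → a ∉ S → b ∉ S → a ∉ X → b ∉ X → Disjoint S X →
    (∀ x ∈ S, G.Adj b x) → (∀ x ∈ S, ¬ G.Adj a x) →
    (∀ x ∈ X, G.Adj a x) → (∀ x ∈ X, ¬ G.Adj b x) →
    G.degree b ≤ G.degree a →
    S.card + X.card + (G.neighborFinset a ∩ G.neighborFinset b).card
      + (if G.Adj a b then 1 else 0) ≤ G.degree b →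
    ∃ G' : SimpleGraph V,
      (∀ v, G'.degree v = G.degree v) ∧
      (∀ u v, u ≠ a → u ≠ b → v ≠ a → v ≠ b → (G'.Adj u v ↔ G.Adj u v)) ∧
      (G'.Adj a b ↔ G.Adj a b) ∧
      (∀ z, G.Adj a z → G.Adj b z → G'.Adj a z ∧ G'.Adj b z) ∧
      (∀ z ∈ S ∪ X, G'.Adj a z) ∧
      (∀ z, G.Adj b z → z ∉ S → G'.Adj b z) := by
  intro m
  induction m with
  | zero =>
    intro G a b S X hcard _ _ _ _ _ _ _ _ hXa _ _ _
    have hS : S = ∅ := Finset.card_eq_zero.1 (Nat.le_zero.1 hcard)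
    subst hS
    exact ⟨G, fun _ => rfl, fun _ _ _ _ _ _ => Iff.rfl, Iff.rfl,
      fun z h1 h2 => ⟨h1, h2⟩, fun z hz => hXa z (by simpa using hz), fun z h1 _ => h1⟩
  | succ m ih =>
    intro G a b S X hcard hab haS hbS haX hbX hSX hSb hSa hXa hXb hdeg hcount
    rcases S.eq_empty_or_nonempty with rfl | ⟨x, hxS⟩
    · exact ⟨G, fun _ => rfl, fun _ _ _ _ _ _ => Iff.rfl, Iff.rfl,
        fun z h1 h2 => ⟨h1, h2⟩, fun z hz => hXa z (by simpa using hz), fun z h1 _ => h1⟩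
    have hbx : G.Adj b x := hSb x hxS
    have hax : ¬ G.Adj a x := hSa x hxS
    have hxa : x ≠ a := fun e => haS (e ▸ hxS)
    have hxb : x ≠ b := fun e => hbS (e ▸ hxS)
    have hxX : x ∉ X := fun hx => (Finset.disjoint_left.1 hSX hxS) hx
    -- find the vertex y to switch with
    have hy : ∃ y, G.Adj a y ∧ ¬ G.Adj b y ∧ y ∉ X ∧ y ≠ b := by
      by_contra hc
      push_neg at hc
      have hsub : G.neighborFinset a ⊆
          (G.neighborFinset a ∩ G.neighborFinset b) ∪ insert b X := by
        intro z hz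
        rw [mem_neighborFinset] at hz
        by_cases hbz : G.Adj b z
        · exact Finset.mem_union_left _ (by simp [mem_neighborFinset, hz, hbz])
        by_cases hzX : z ∈ X
        · exact Finset.mem_union_right _ (Finset.mem_insert_of_mem hzX)
        · exact Finset.mem_union_right _ (Finset.mem_insert.2 (Or.inl (hc z hz hbz hzX)))
      have h1 := Finset.card_le_card hsub
      have h2 := Finset.card_union_le (G.neighborFinset a ∩ G.neighborFinset b) (insert b X)
      have h3 := Finset.card_insert_le b X
      have h4 : G.degree a = (G.neighborFinset a).card := rfl
      have h5 : 0 < S.card := Finset.card_pos.2 ⟨x, hxS⟩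
      by_cases hab2 : G.Adj a b
      · simp only [hab2, if_pos] at hcount; omega
      · have hb : b ∉ G.neighborFinset a := by simp [mem_neighborFinset, hab2]
        have hsub2 : G.neighborFinset a ⊆
            (G.neighborFinset a ∩ G.neighborFinset b) ∪ X := by
          intro z hz
          rcases Finset.mem_union.1 (hsub hz) with h | h
          · exact Finset.mem_union_left _ h
          · rcases Finset.mem_insert.1 h with rfl | h
            · exact absurd hz hb
            · exact Finset.mem_union_right _ h
        have h1' := Finset.card_le_card hsub2
        have h2' := Finset.card_union_le (G.neighborFinset a ∩ G.neighborFinset b) X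
        simp only [hab2, if_neg, not_false_iff] at hcount
        omega
    obtain ⟨y, hay, hby, hyX, hyb⟩ := hy
    have sh : SwitchHyp G a y b x := ⟨hab, hay, hbx, hax, hby, hxa, hyb⟩
    obtain ⟨d1, d2, d3, d4, d5, d6⟩ := sh.distinct
    set G1 := switchGraph G a y b x with hG1
    have A1 : ∀ z, G1.Adj a z ↔ (z = x ∨ (z ≠ y ∧ G.Adj a z)) := switch_adj_a' sh
    have B1 : ∀ z, G1.Adj b z ↔ (z = y ∨ (z ≠ x ∧ G.Adj b z)) := switch_adj_b' sh
    have O1 : ∀ u v : V, u ≠ a → u ≠ b → v ≠ a → v ≠ b → (G1.Adj u v ↔ G.Adj u v) :=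
      fun u v h1 h2 h3 h4 => switch_adj_notab sh h1 h2 h3 h4
    have Hdeg : ∀ v, G1.degree v = G.degree v := switch_degree sh
    have Hcomm : G1.neighborFinset a ∩ G1.neighborFinset b =
        G.neighborFinset a ∩ G.neighborFinset b := by
      ext z
      simp only [Finset.mem_inter, mem_neighborFinset, A1, B1]
      constructor
      · rintro ⟨h1', h2'⟩
        rcases h1' with rfl | ⟨hzy, hza⟩
        · rcases h2' with e | ⟨hzx, _⟩
          · exact absurd e d6
          · exact absurd rfl hzx
        · rcases h2' with rfl | ⟨hzx, hzb⟩
          · exact absurd rfl hzy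
          · exact ⟨hza, hzb⟩
      · rintro ⟨hza, hzb⟩
        exact ⟨Or.inr ⟨fun e => hby (e ▸ hzb), hza⟩, Or.inr ⟨fun e => hax (e ▸ hza), hzb⟩⟩
    have Hab : G1.Adj a b ↔ G.Adj a b := by
      rw [A1 b]
      constructor
      · rintro (e | ⟨_, h⟩); exact absurd e d4; exact h
      · intro h; exact Or.inr ⟨d5, h⟩
    obtain ⟨G', c1, c2, c3, c4, c5, c6⟩ := ih G1 a b (S.erase x) (insert x X)
      (by have := Finset.card_erase_of_mem hxS; omega)
      hab (fun h => haS (Finset.mem_of_mem_erase h)) (fun h => hbS (Finset.mem_of_mem_erase h))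
      (by simp [haX, hxa.symm, d2]) (by simp [hbX, d4])
      (by
        rw [Finset.disjoint_insert_right]
        exact ⟨Finset.notMem_erase x S, Finset.disjoint_of_subset_left (Finset.erase_subset x S) hSX⟩)
      (fun z hz => (B1 z).2 (Or.inr ⟨Finset.ne_of_mem_erase hz, hSb z (Finset.mem_of_mem_erase hz)⟩))
      (fun z hz => by
        rw [A1 z]
        push_neg
        exact ⟨Finset.ne_of_mem_erase hz, fun _ => hSa z (Finset.mem_of_mem_erase hz)⟩)
      (fun z hz => by
        rcases Finset.mem_insert.1 hz with rfl | hz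
        · exact (A1 z).2 (Or.inl rfl)
        · exact (A1 z).2 (Or.inr ⟨fun e => hyX (e ▸ hz), hXa z hz⟩))
      (fun z hz => by
        rw [B1 z]
        push_neg
        rcases Finset.mem_insert.1 hz with rfl | hz
        · exact ⟨d6, fun c => absurd rfl c⟩
        · exact ⟨fun e => hyX (e ▸ hz), fun _ => hXb z hz⟩)
      (by rw [Hdeg, Hdeg]; exact hdeg)
      (by
        rw [Hdeg, Hcomm, Finset.card_erase_of_mem hxS, Finset.card_insert_of_notMem hxX]
        have : (if G1.Adj a b then 1 else 0) = (if G.Adj a b then 1 else 0) := by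
          simp [Hab]
        rw [this]
        have h5 : 0 < S.card := Finset.card_pos.2 ⟨x, hxS⟩
        omega)
    refine ⟨G', fun v => (c1 v).trans (Hdeg v), ?_, ?_, ?_, ?_, ?_⟩
    · intro u v h1 h2 h3 h4
      rw [c2 u v h1 h2 h3 h4, O1 u v h1 h2 h3 h4]
    · rw [c3, Hab]
    · intro z h1 h2
      have hz1 : G1.Adj a z := (A1 z).2 (Or.inr ⟨fun e => hby (e ▸ h2), h1⟩)
      have hz2 : G1.Adj b z := (B1 z).2 (Or.inr ⟨fun e => hax (e ▸ h1), h2⟩)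
      exact c4 z hz1 hz2
    · intro z hz
      apply c5
      rcases Finset.mem_union.1 hz with hz | hz
      · by_cases hzx : z = x
        · exact Finset.mem_union_right _ (Finset.mem_insert.2 (Or.inl hzx))
        · exact Finset.mem_union_left _ (Finset.mem_erase.2 ⟨hzx, hz⟩)
      · exact Finset.mem_union_right _ (Finset.mem_insert_of_mem hz)
    · intro z h1 h2
      have : G1.Adj b z := (B1 z).2 (Or.inr ⟨fun e => h2 (e ▸ hxS), h1⟩)
      exact c6 z this (fun hc => h2 (Finset.mem_of_mem_erase hc))

open Finset in
lemma replace {W : Type*} [Fintype W] [DecidableEq W] (H : SimpleGraph W) (G : SimpleGraph V)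
    (f : H →g G) (hf : Function.Injective f) (w : W) (a : V)
    (hne : a ≠ f w) (hdeg : G.degree (f w) ≤ G.degree a)
    (hcase : (∀ z, f z ≠ a) ∨ (∃ w', f w' = a ∧ ∀ z, H.Adj w' z → z = w ∨ H.Adj w z)) :
    ∃ G' : SimpleGraph V, (∀ v, G'.degree v = G.degree v) ∧
      ∃ f' : H →g G', Function.Injective f' ∧ f' w = a ∧
        ∀ z, z ≠ w → f z ≠ a → f' z = f z := by
  classical
  set b := f w with hb
  set S : Finset V := ((H.neighborFinset w).image f \ G.neighborFinset a).erase a with hS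
  have hSmem : ∀ x, x ∈ S ↔ (x ≠ a ∧ (∃ z, H.Adj w z ∧ f z = x) ∧ ¬ G.Adj a x) := by
    intro x
    rw [hS]
    simp only [Finset.mem_erase, Finset.mem_sdiff, Finset.mem_image, mem_neighborFinset]
  have hSb : ∀ x ∈ S, G.Adj b x := by
    intro x hx
    obtain ⟨-, ⟨z, hz, rfl⟩, -⟩ := (hSmem x).1 hx
    exact f.map_adj hz
  have hSa : ∀ x ∈ S, ¬ G.Adj a x := fun x hx => ((hSmem x).1 hx).2.2
  have haS : a ∉ S := fun hx => ((hSmem a).1 hx).1 rfl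
  have hbS : b ∉ S := by
    intro hx
    obtain ⟨-, ⟨z, hz, hzb⟩, -⟩ := (hSmem b).1 hx
    exact H.loopless.irrefl w (hf hzb ▸ hz)
  have hdisj : Disjoint S (G.neighborFinset a ∩ G.neighborFinset b) := by
    rw [Finset.disjoint_left]
    intro x hx hx2
    exact hSa x hx (by simpa using (Finset.mem_inter.1 hx2).1)
  have hcount : S.card + (∅ : Finset V).card
      + (G.neighborFinset a ∩ G.neighborFinset b).card
      + (if G.Adj a b then 1 else 0) ≤ G.degree b := by
    have hsub : S ∪ (G.neighborFinset a ∩ G.neighborFinset b) ⊆ G.neighborFinset b := by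
      intro x hx
      rcases Finset.mem_union.1 hx with hx | hx
      · exact (mem_neighborFinset _ _ _).2 (hSb x hx)
      · exact Finset.mem_of_mem_inter_right hx
    have hcardu := Finset.card_union_of_disjoint hdisj
    by_cases hab : G.Adj a b
    · have hsub2 : insert a (S ∪ (G.neighborFinset a ∩ G.neighborFinset b))
          ⊆ G.neighborFinset b := by
        intro x hx
        rcases Finset.mem_insert.1 hx with rfl | hx
        · exact (mem_neighborFinset _ _ _).2 hab.symm
        · exact hsub hx
      have hnotmem : a ∉ S ∪ (G.neighborFinset a ∩ G.neighborFinset b) := by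
        intro hx
        rcases Finset.mem_union.1 hx with hx | hx
        · exact haS hx
        · exact G.loopless.irrefl a (by simpa using (Finset.mem_inter.1 hx).1)
      have := Finset.card_le_card hsub2
      rw [Finset.card_insert_of_notMem hnotmem, hcardu] at this
      have hdb : G.degree b = (G.neighborFinset b).card := rfl
      have h0 : (∅ : Finset V).card = 0 := Finset.card_empty
      rw [if_pos hab]
      omega
    · have := Finset.card_le_card hsub
      rw [hcardu] at this
      have hdb : G.degree b = (G.neighborFinset b).card := rfl
      have h0 : (∅ : Finset V).card = 0 := Finset.card_empty
      rw [if_neg hab]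
      omega
  have hab' : a ≠ b := hne
  obtain ⟨G', c1, c2, c3, c4, c5, c6⟩ := absorb S.card G a b S ∅ le_rfl
    hab' haS hbS (Finset.notMem_empty a) (Finset.notMem_empty b)
    (Finset.disjoint_empty_right S) hSb hSa
    (fun x hx => absurd hx (Finset.notMem_empty x))
    (fun x hx => absurd hx (Finset.notMem_empty x)) hdeg hcount
  have key1 : ∀ z, z ≠ w → f z ≠ a → H.Adj w z → G'.Adj a (f z) := by
    intro z hzw hza hadj
    by_cases hN : G.Adj a (f z)
    · exact (c4 (f z) hN (f.map_adj hadj)).1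
    · exact c5 (f z) (Finset.mem_union_left _ ((hSmem (f z)).2 ⟨hza, ⟨z, hadj, rfl⟩, hN⟩))
  rcases hcase with himg | ⟨w', hw'a, hdom⟩
  · -- `a` is not in the image of `f`
    refine ⟨G', c1, ⟨Function.update f w a, ?_⟩, ?_, ?_, ?_⟩
    · intro z z' hzz'
      by_cases hz : z = w
      · rw [hz] at hzz' ⊢
        have hz' : z' ≠ w := fun e => H.loopless.irrefl w (e ▸ hzz')
        rw [Function.update_self, Function.update_of_ne hz']
        exact key1 z' hz' (himg z') hzz'
      by_cases hz' : z' = w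
      · rw [hz'] at hzz' ⊢
        rw [Function.update_self, Function.update_of_ne hz]
        exact (key1 z hz (himg z) hzz'.symm).symm
      · rw [Function.update_of_ne hz, Function.update_of_ne hz']
        exact (c2 (f z) (f z') (himg z) (fun e => hz (hf e)) (himg z')
          (fun e => hz' (hf e))).2 (f.map_adj hzz')
    · intro u v huv
      have huv2 : Function.update (⇑f) w a u = Function.update (⇑f) w a v := huv
      rw [Function.update_apply, Function.update_apply] at huv2
      split_ifs at huv2 with h1 h2 h2
      · exact h1.trans h2.symm
      · exact absurd huv2.symm (himg v)
      · exact absurd huv2 (himg u)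
      · exact hf huv2
    · exact Function.update_self w a f
    · intro z hz _; exact Function.update_of_ne hz a f
  · -- `a = f w'` is in the image of `f`
    have hww' : w' ≠ w := fun e => hne (e ▸ hw'a).symm
    have key2 : ∀ z, z ≠ w → z ≠ w' → H.Adj w' z → G'.Adj b (f z) := by
      intro z hzw hzw' hadj
      rcases hdom z hadj with rfl | hadj2
      · exact absurd rfl hzw
      · exact (c4 (f z) (hw'a ▸ f.map_adj hadj) (f.map_adj hadj2)).2
    refine ⟨G', c1, ⟨fun z => f (Equiv.swap w w' z), ?_⟩, ?_, ?_, ?_⟩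
    · intro z z' hzz'
      show G'.Adj (f (Equiv.swap w w' z)) (f (Equiv.swap w w' z'))
      have hadjσ : ∀ u, H.Adj w u → u ≠ w → u ≠ w' →
          G'.Adj (f (Equiv.swap w w' w)) (f (Equiv.swap w w' u)) := by
        intro u hu h1 h2
        rw [Equiv.swap_apply_left, Equiv.swap_apply_of_ne_of_ne h1 h2, hw'a]
        exact key1 u h1 (fun e => h2 (hf (e.trans hw'a.symm))) hu
      have hadjσ' : ∀ u, H.Adj w' u → u ≠ w → u ≠ w' →
          G'.Adj (f (Equiv.swap w w' w')) (f (Equiv.swap w w' u)) := by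
        intro u hu h1 h2
        rw [Equiv.swap_apply_right, Equiv.swap_apply_of_ne_of_ne h1 h2, ← hb]
        exact key2 u h1 h2 hu
      by_cases hz : z = w
      · rw [hz] at hzz' ⊢
        by_cases hz' : z' = w'
        · rw [hz'] at hzz' ⊢
          have hGab : G.Adj a b := by
            rw [← hw'a, hb]
            exact (f.map_adj hzz').symm
          rw [Equiv.swap_apply_left, Equiv.swap_apply_right, hw'a, ← hb]
          exact c3.2 hGab
        · exact hadjσ z' hzz' (fun e => H.loopless.irrefl w (e ▸ hzz')) hz'
      by_cases hz' : z' = w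
      · rw [hz'] at hzz' ⊢
        by_cases hzw' : z = w'
        · rw [hzw'] at hzz' ⊢
          have hGab : G.Adj a b := by
            rw [← hw'a, hb]
            exact f.map_adj hzz'
          rw [Equiv.swap_apply_left, Equiv.swap_apply_right, hw'a, ← hb]
          exact (c3.2 hGab).symm
        · exact (hadjσ z hzz'.symm (fun e => H.loopless.irrefl w (e ▸ hzz'.symm)) hzw').symm
      by_cases hzw' : z = w'
      · rw [hzw'] at hzz' ⊢
        have hz'w' : z' ≠ w' := fun e => H.loopless.irrefl w' (e ▸ hzz')
        exact hadjσ' z' hzz' hz' hz'w'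
      by_cases hz'w' : z' = w'
      · rw [hz'w'] at hzz' ⊢
        exact (hadjσ' z hzz'.symm hz hzw').symm
      · rw [Equiv.swap_apply_of_ne_of_ne hz hzw', Equiv.swap_apply_of_ne_of_ne hz' hz'w']
        exact (c2 (f z) (f z') (fun e => hzw' (hf (e.trans hw'a.symm)))
          (fun e => hz (hf e)) (fun e => hz'w' (hf (e.trans hw'a.symm)))
          (fun e => hz' (hf e))).2 (f.map_adj hzz')
    · exact hf.comp (Equiv.swap w w').injective
    · show f (Equiv.swap w w' w) = a
      rw [Equiv.swap_apply_left, hw'a]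
    · intro z hzw hza
      show f (Equiv.swap w w' z) = f z
      have hzw' : z ≠ w' := fun e => hza (e ▸ hw'a)
      rw [Equiv.swap_apply_of_ne_of_ne hzw hzw']

lemma splitGraph_adj' {r s : ℕ} {u v : Fin (r + s)} :
    (SimpleGraph.fromRel (fun a (_ : Fin (r+s)) => (a : ℕ) < r)).Adj u v ↔
      u ≠ v ∧ ((u : ℕ) < r ∨ (v : ℕ) < r) := by
  rw [SimpleGraph.fromRel_adj]

theorem stmt4' (n r s : ℕ) (d : Fin n → ℕ) (hd : Antitone d)
    (H : SimpleGraph (Fin (r + s)))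
    (hHadj : ∀ u v, H.Adj u v ↔ u ≠ v ∧ ((u : ℕ) < r ∨ (v : ℕ) < r))
    (G0 : SimpleGraph (Fin n)) (hG0 : ∀ v, G0.degree v = d v)
    (f0 : H →g G0) (hf0 : Function.Injective f0) :
    ∃ G : SimpleGraph (Fin n), (∀ v, G.degree v = d v) ∧
      ∃ f : H →g G, Function.Injective f ∧
        ∀ u : Fin (r + s), ((f u : Fin n) : ℕ) = (u : ℕ) := by
  suffices hmain : ∀ k, k ≤ r + s → ∃ G : SimpleGraph (Fin n), (∀ v, G.degree v = d v) ∧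
      ∃ f : H →g G, Function.Injective f ∧
        ∀ u : Fin (r + s), (u : ℕ) < k → ((f u : Fin n) : ℕ) = (u : ℕ) by
    obtain ⟨G, hG, f, hf, hfu⟩ := hmain (r + s) le_rfl
    exact ⟨G, hG, f, hf, fun u => hfu u u.isLt⟩
  intro k
  induction k with
  | zero => exact fun _ => ⟨G0, hG0, f0, hf0, fun u hu => absurd hu (Nat.not_lt_zero _)⟩
  | succ k ih =>
    intro hk
    obtain ⟨G, hG, f, hf, hfu⟩ := ih (Nat.le_of_succ_le hk)
    have hkrs : k < r + s := hk
    set w : Fin (r + s) := ⟨k, hkrs⟩ with hwdef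
    have hwval : (w : ℕ) = k := rfl
    have hfw_ge : k ≤ ((f w : Fin n) : ℕ) := by
      by_contra hltc
      push_neg at hltc
      set u : Fin (r + s) := ⟨((f w : Fin n) : ℕ), lt_trans hltc hkrs⟩ with hudef
      have h1 : ((f u : Fin n) : ℕ) = ((f w : Fin n) : ℕ) := hfu u hltc
      have h2 : f u = f w := Fin.ext h1
      have h3 : u = w := hf h2
      have h4 : ((f w : Fin n) : ℕ) = k := congrArg Fin.val h3
      omega
    by_cases heq : ((f w : Fin n) : ℕ) = k
    · refine ⟨G, hG, f, hf, fun u hu => ?_⟩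
      rcases Nat.lt_succ_iff_lt_or_eq.1 hu with hu | hu
      · exact hfu u hu
      · have huw : u = w := Fin.ext hu
        rw [huw, heq, hwdef]
    have hlt : k < ((f w : Fin n) : ℕ) := lt_of_le_of_ne hfw_ge (Ne.symm heq)
    have hkn : k < n := lt_trans hlt (f w).isLt
    set a : Fin n := ⟨k, hkn⟩ with hadef
    have hne : a ≠ f w := by
      intro e
      have := congrArg Fin.val e
      simp only [hadef] at this
      omega
    have hdeg : G.degree (f w) ≤ G.degree a := by
      rw [hG, hG]
      exact hd (by rw [Fin.le_def]; exact le_of_lt hlt)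
    have hcase : (∀ z, f z ≠ a) ∨
        (∃ w', f w' = a ∧ ∀ z, H.Adj w' z → z = w ∨ H.Adj w z) := by
      by_cases hh : ∀ z, f z ≠ a
      · exact Or.inl hh
      push_neg at hh
      obtain ⟨w', hw'⟩ := hh
      have hw'k : k < (w' : ℕ) := by
        rcases Nat.lt_trichotomy (w' : ℕ) k with hl | he | hg
        · have h1 := hfu w' hl
          rw [hw'] at h1
          simp only [hadef] at h1
          omega
        · have : w' = w := Fin.ext he
          rw [this] at hw'
          have := congrArg Fin.val hw'
          simp only [hadef] at this
          omega
        · exact hg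
      refine Or.inr ⟨w', hw', fun z hz => ?_⟩
      by_cases hzw : z = w
      · exact Or.inl hzw
      rw [hHadj] at hz
      refine Or.inr ((hHadj w z).2 ⟨fun e => hzw e.symm, ?_⟩)
      obtain ⟨-, hlt'⟩ := hz
      rcases hlt' with hcr | hcr
      · left
        show k < r
        omega
      · exact Or.inr hcr
    obtain ⟨G', hdeg', f', hinj', hfw', hfz'⟩ := replace H G f hf w a hne hdeg hcase
    refine ⟨G', fun v => (hdeg' v).trans (hG v), f', hinj', fun u hu => ?_⟩
    rcases Nat.lt_succ_iff_lt_or_eq.1 hu with hu | hu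
    · have huw : u ≠ w := by
        intro e
        have := congrArg Fin.val e
        omega
      have hfua : f u ≠ a := by
        intro e
        have h1 := congrArg Fin.val e
        have h2 := hfu u hu
        simp only [hadef] at h1
        omega
      rw [hfz' u huw hfua]
      exact hfu u hu
    · have huw : u = w := Fin.ext hu
      rw [huw, hfw']


/-- Yin: if a nonincreasing graphic sequence is potentially
`K_r ∨ K̄_s`-graphic, then it has a realization in which the vertices of the
copy of `K_r` are the `r` vertices of highest degree (indices `0,…,r-1` in the
sorted order) and the vertices of the copy of `K̄_s` are the next `s` vertices
of highest degree (indices `r,…,r+s-1`). -/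
theorem stmt4 (n r s : ℕ) (d : Fin n → ℕ) (hd : Antitone d)
    (h : Potentially (splitGraph r s) d) :
    ∃ G : SimpleGraph (Fin n), (∀ v, G.degree v = d v) ∧
      ∃ f : splitGraph r s →g G, Function.Injective f ∧
        ∀ u : Fin (r + s), ((f u : Fin n) : ℕ) = (u : ℕ) := by
  obtain ⟨G0, hG0, f0, hf0⟩ := h
  exact stmt4' n r s d hd (splitGraph r s)
    (fun u v => SimpleGraph.fromRel_adj _ u v) G0 hG0 f0 hf0
end

section
/- Let H be a graph of order k with at least one edge, let α(H)+1 ≤ i ≤ k, and let ∇_i(H) = min{Δ(F) : F an induced subgraph of H on i vertices}. For n sufficiently large, no realization of the sequence π̃_i(H,n) = ((n-1)^{k-i}, (k-i+∇_i(H)-1)^{n-k+i}) (with the last term reduced by 1 if necessary to make the sum even) contains H as a subgraph. -/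
open SimpleGraph
open scoped Classical

noncomputable section

/-- The independence number of a graph on `Fin k`. -/
def indepNum {k : ℕ} (H : SimpleGraph (Fin k)) : ℕ :=
  sSup {m | ∃ s : Finset (Fin k), s.card = m ∧
    ∀ a ∈ s, ∀ b ∈ s, a ≠ b → ¬ H.Adj a b}

/-- `∇_i(H)`: the minimum of the maximum degree over all induced subgraphs of
`H` on `i` vertices. -/
def nabla {k : ℕ} (H : SimpleGraph (Fin k)) (i : ℕ) : ℕ :=
  sInf {m | ∃ s : Finset (Fin k), s.card = i ∧
    (H.induce (↑s : Set (Fin k))).maxDegree = m}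

lemma full_adj {n : ℕ} (G : SimpleGraph (Fin n)) (j w : Fin n)
    (h : G.degree j = n - 1) (hw : w ≠ j) : G.Adj j w := by
  have hsub : G.neighborFinset j ⊆ Finset.univ.erase j := by
    intro x hx
    rw [SimpleGraph.mem_neighborFinset] at hx
    exact Finset.mem_erase.2 ⟨(G.ne_of_adj hx).symm, Finset.mem_univ x⟩
  have hc : (Finset.univ.erase j).card ≤ (G.neighborFinset j).card := by
    rw [Finset.card_erase_of_mem (Finset.mem_univ j), Finset.card_univ,
      Fintype.card_fin]
    rw [← SimpleGraph.card_neighborFinset_eq_degree] at h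
    omega
  have heq := Finset.eq_of_subset_of_card_le hsub hc
  have : w ∈ G.neighborFinset j := by
    rw [heq]
    exact Finset.mem_erase.2 ⟨hw, Finset.mem_univ w⟩
  exact (SimpleGraph.mem_neighborFinset _ _ _).1 this

lemma nabla_mem {k : ℕ} (H : SimpleGraph (Fin k)) (i : ℕ) (hi2 : i ≤ k) :
    ∃ s : Finset (Fin k), s.card = i ∧
      (H.induce (↑s : Set (Fin k))).maxDegree = nabla H i := by
  have hne : {m | ∃ s : Finset (Fin k), s.card = i ∧
      (H.induce (↑s : Set (Fin k))).maxDegree = m}.Nonempty := by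
    have hik : i ≤ (Finset.univ : Finset (Fin k)).card := by
      rw [Finset.card_univ, Fintype.card_fin]; exact hi2
    obtain ⟨s, _, hs⟩ := Finset.exists_subset_card_eq (s := Finset.univ) hik
    exact ⟨_, s, hs, rfl⟩
  exact Nat.sInf_mem hne

lemma nabla_ge_one {k : ℕ} (H : SimpleGraph (Fin k)) (i : ℕ)
    (hi1 : _root_.indepNum H + 1 ≤ i) (hi2 : i ≤ k) : 1 ≤ nabla H i := by
  obtain ⟨s, hcard, hmax⟩ := nabla_mem H i hi2
  by_contra h
  push_neg at h
  have h0 : (H.induce (↑s : Set (Fin k))).maxDegree = 0 := by omega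
  -- s is independent
  have hindep : ∀ a ∈ s, ∀ b ∈ s, a ≠ b → ¬ H.Adj a b := by
    intro a ha b hb hab hadj
    have hadj' : (H.induce (↑s : Set (Fin k))).Adj ⟨a, ha⟩ ⟨b, hb⟩ := by
      simpa [SimpleGraph.comap_adj] using hadj
    have : 0 < (H.induce (↑s : Set (Fin k))).degree ⟨a, ha⟩ := by
      rw [← SimpleGraph.card_neighborFinset_eq_degree]
      exact Finset.card_pos.2 ⟨⟨b, hb⟩, (SimpleGraph.mem_neighborFinset _ _ _).2 hadj'⟩
    have := SimpleGraph.degree_le_maxDegree (H.induce (↑s : Set (Fin k))) ⟨a, ha⟩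
    omega
  have hle : i ≤ _root_.indepNum H := by
    apply le_csSup
    · exact ⟨k, fun m hm => by
        obtain ⟨t, ht, _⟩ := hm
        calc m = t.card := ht.symm
        _ ≤ k := by simpa using Finset.card_le_univ t⟩
    · exact ⟨s, hcard, hindep⟩
  omega

/-- The sequence `π̃_i(H,n) = ((n-1)^{k-i}, (k-i+∇_i(H)-1)^{n-k+i})`, with the
last term reduced by one when the sum of the unadjusted sequence is odd. -/
def tildePi (k i nab n : ℕ) : Fin n → ℕ :=
  fun j =>
    if (j : ℕ) < k - i then n - 1
    else if (j : ℕ) = n - 1 ∧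
        ¬ Even ((k - i) * (n - 1) + (n - (k - i)) * (k - i + nab - 1)) then
      k - i + nab - 1 - 1
    else k - i + nab - 1

/-- for a graph `H` of order `k` with at least one edge and
`α(H)+1 ≤ i ≤ k`, for `n` sufficiently large no realization of `π̃_i(H,n)`
contains `H` as a subgraph. -/
theorem stmt5 (k : ℕ) (H : SimpleGraph (Fin k)) (hne : H ≠ ⊥) (i : ℕ)
    (hi1 : _root_.indepNum H + 1 ≤ i) (hi2 : i ≤ k) :
    ∃ N : ℕ, ∀ n, N ≤ n → ∀ G : SimpleGraph (Fin n),
      (∀ v, G.degree v = tildePi k i (nabla H i) n v) →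
      ¬ ∃ f : H →g G, Function.Injective f := by
  classical
  set nb := nabla H i with hnb
  have hnb1 : 1 ≤ nb := nabla_ge_one H i hi1 hi2
  refine ⟨k + nb + 2, fun n hn G hdeg => ?_⟩
  rintro ⟨f, hf⟩
  set d := k - i + nb - 1 with hd
  have hdn : d < n - 1 := by omega
  have hmn : k - i ≤ n := by omega
  -- any vertex with index ≥ k - i has degree ≤ d
  have hlow : ∀ w : Fin n, k - i ≤ (w : ℕ) → G.degree w ≤ d := by
    intro w hw
    rw [hdeg w, tildePi]
    rw [if_neg (by omega)]
    split <;> omega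
  have hfull : ∀ w : Fin n, (w : ℕ) < k - i → G.degree w = n - 1 := by
    intro w hw
    rw [hdeg w, tildePi, if_pos hw]
  -- the set of H-vertices mapping to low-index G-vertices
  set T : Finset (Fin k) :=
    Finset.univ.filter (fun v => ¬ ((f v : ℕ) < k - i)) with hT
  set A2 : Finset (Fin n) :=
    Finset.univ.filter (fun j : Fin n => (j : ℕ) < k - i) with hA2
  have hA2card : A2.card = k - i := by
    have : A2 = Finset.map ⟨Fin.castLE hmn, Fin.castLE_injective hmn⟩
        Finset.univ := by
      ext j
      simp only [hA2, Finset.mem_filter, Finset.mem_univ, true_and,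
        Finset.mem_map, Function.Embedding.coeFn_mk]
      constructor
      · intro hj; exact ⟨⟨(j : ℕ), hj⟩, Fin.ext rfl⟩
      · rintro ⟨j', rfl⟩; exact j'.isLt
    rw [this, Finset.card_map, Finset.card_univ, Fintype.card_fin]
  have hTcc : (Finset.univ.filter (fun v : Fin k => (f v : ℕ) < k - i)).card
      ≤ k - i := by
    have h := Finset.card_le_card_of_injOn (fun v => f v)
      (s := Finset.univ.filter (fun v : Fin k => (f v : ℕ) < k - i))
      (t := A2)
      (fun v hv => by
        simp only [hA2, Finset.mem_coe, Finset.mem_filter, Finset.mem_univ, true_and] at hv ⊢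
        exact hv)
      (fun a _ b _ h => hf h)
    rwa [hA2card] at h
  have hsplit := Finset.card_filter_add_card_filter_not
    (s := (Finset.univ : Finset (Fin k)))
    (p := fun v : Fin k => (f v : ℕ) < k - i)
  rw [Finset.card_univ, Fintype.card_fin] at hsplit
  have hTcard : i ≤ T.card := by
    rw [hT]; omega
  obtain ⟨s, hsT, hscard⟩ := Finset.exists_subset_card_eq (s := T) hTcard
  have hnbs : nb ≤ (H.induce (↑s : Set (Fin k))).maxDegree :=
    Nat.sInf_le ⟨s, hscard, rfl⟩
  have hsne : Nonempty (↑s : Set (Fin k)) := by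
    have : 0 < s.card := by omega
    obtain ⟨a, ha⟩ := Finset.card_pos.1 this
    exact ⟨⟨a, by simpa using ha⟩⟩
  obtain ⟨v, hv⟩ := (H.induce (↑s : Set (Fin k))).exists_maximal_degree_vertex
  -- v's image has low degree but many neighbors
  have hmemT : ∀ x : (↑s : Set (Fin k)), k - i ≤ (f ↑x : ℕ) := by
    intro x
    have hxs : (↑x : Fin k) ∈ s := by exact_mod_cast x.2
    have := hsT hxs
    rw [hT, Finset.mem_filter] at this
    omega
  set w := f ↑v with hw
  set A1 : Finset (Fin n) :=
    ((H.induce (↑s : Set (Fin k))).neighborFinset v).image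
      (fun u : (↑s : Set (Fin k)) => f ↑u)
    with hA1
  have hA1card : A1.card = (H.induce (↑s : Set (Fin k))).maxDegree := by
    have hinj : Function.Injective (fun u : (↑s : Set (Fin k)) => f ↑u) :=
      fun a b h => Subtype.val_injective (hf h)
    rw [hA1, Finset.card_image_of_injective _ hinj,
      SimpleGraph.card_neighborFinset_eq_degree, hv]
  have hsub1 : A1 ⊆ G.neighborFinset w := by
    intro x hx
    rw [hA1, Finset.mem_image] at hx
    obtain ⟨u, hu, rfl⟩ := hx
    rw [SimpleGraph.mem_neighborFinset] at hu ⊢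
    exact f.map_adj hu
  have hsub2 : A2 ⊆ G.neighborFinset w := by
    intro j hj
    rw [hA2, Finset.mem_filter] at hj
    rw [SimpleGraph.mem_neighborFinset]
    have hwj : w ≠ j := by
      have := hmemT v
      intro h
      rw [← h] at hj
      omega
    exact (full_adj G j w (hfull j hj.2) hwj).symm
  have hdisj : Disjoint A1 A2 := by
    rw [Finset.disjoint_left]
    intro x hx1 hx2
    rw [hA1, Finset.mem_image] at hx1
    obtain ⟨u, _, rfl⟩ := hx1
    rw [hA2, Finset.mem_filter] at hx2
    have := hmemT u
    omega
  have hcards : A1.card + A2.card ≤ G.degree w := by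
    rw [← Finset.card_union_of_disjoint hdisj,
      ← SimpleGraph.card_neighborFinset_eq_degree]
    exact Finset.card_le_card (Finset.union_subset hsub1 hsub2)
  have hwlow := hlow w (hmemT v)
  omega
end
end

section
/- Every realization G of the sequence π̃_i(H,n) = ((n-1)^{k-i}, (k-i+∇_i(H)-1)^{n-k+i}) is the join of a complete graph on k-i vertices with a graph on n-k+i vertices of maximum degree ∇_i(H)-1. -/
open SimpleGraph Finset
open scoped Classical

noncomputable section

/-- every realization `G` of
`π̃_i(H,n) = ((n-1)^{k-i}, (k-i+∇_i(H)-1)^{n-k+i})` is the join of a complete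
graph on `k-i` vertices with a graph on `n-k+i` vertices of maximum degree
`∇_i(H)-1`: the `k-i` vertices of degree `n-1` are pairwise adjacent and joined
to every other vertex, and every remaining vertex has exactly `∇_i(H)-1`
neighbors among the remaining vertices. -/
theorem stmt6 (k i n : ℕ) (H : SimpleGraph (Fin k)) (hi1 : _root_.indepNum H + 1 ≤ i)
    (hi2 : i ≤ k) (hkn : k ≤ n) (G : SimpleGraph (Fin n))
    (hG : ∀ v : Fin n, G.degree v =
      if (v : ℕ) < k - i then n - 1 else k - i + nabla H i - 1) :
    (∀ u v : Fin n, (u : ℕ) < k - i → u ≠ v → G.Adj u v) ∧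
    (∀ v : Fin n, k - i ≤ (v : ℕ) →
      ((G.neighborFinset v).filter (fun u => k - i ≤ (u : ℕ))).card =
        nabla H i - 1) := by
  have hcn : k - i ≤ n := le_trans (Nat.sub_le _ _) hkn
  have part1 : ∀ u v : Fin n, (u : ℕ) < k - i → u ≠ v → G.Adj u v := by
    intro u v hu huv
    have hdeg : G.degree u = n - 1 := by rw [hG u, if_pos hu]
    have hsub : G.neighborFinset u ⊆ Finset.univ.erase u := by
      intro w hw
      rw [mem_neighborFinset] at hw
      exact Finset.mem_erase.2 ⟨(G.ne_of_adj hw).symm, Finset.mem_univ _⟩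
    have hcard : (Finset.univ.erase u).card ≤ (G.neighborFinset u).card := by
      rw [Finset.card_erase_of_mem (Finset.mem_univ _),
        G.card_neighborFinset_eq_degree, hdeg, Finset.card_univ, Fintype.card_fin]
    have heq := Finset.eq_of_subset_of_card_le hsub hcard
    have : v ∈ G.neighborFinset u := by
      rw [heq]
      exact Finset.mem_erase.2 ⟨huv.symm, Finset.mem_univ _⟩
    rwa [mem_neighborFinset] at this
  refine ⟨part1, ?_⟩
  intro v hv
  have hdeg : G.degree v = k - i + nabla H i - 1 := by
    rw [hG v, if_neg (by omega)]
  have hsplit := Finset.card_filter_add_card_filter_not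
    (s := G.neighborFinset v) (p := fun u : Fin n => (u : ℕ) < k - i)
  have hA : ((G.neighborFinset v).filter (fun u : Fin n => (u : ℕ) < k - i)) =
      Finset.univ.filter (fun u : Fin n => (u : ℕ) < k - i) := by
    apply Finset.ext
    intro u
    simp only [Finset.mem_filter, mem_neighborFinset, Finset.mem_univ, true_and]
    constructor
    · exact fun h => h.2
    · intro hu
      refine ⟨(part1 u v hu ?_).symm, hu⟩
      intro h
      rw [h] at hu
      omega
  have hAcard : ((G.neighborFinset v).filter
      (fun u : Fin n => (u : ℕ) < k - i)).card = k - i := by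
    rw [hA, ← Fintype.card_subtype, Fintype.card_fin_lt_of_le hcn]
  rw [G.card_neighborFinset_eq_degree, hdeg, hAcard] at hsplit
  have hgoal : ((G.neighborFinset v).filter
        (fun u : Fin n => k - i ≤ (u : ℕ))).card =
      ((G.neighborFinset v).filter
        (fun u : Fin n => ¬ (u : ℕ) < k - i)).card := by
    congr 1
    apply Finset.filter_congr
    intro x _
    simp [Nat.not_lt]
  have key : #(image Fin.val ((G.neighborFinset v).filter
      (fun a : Fin n => k - i ≤ (a : ℕ)))) = nabla H i - 1 := by
    rw [Finset.card_image_of_injective _ Fin.val_injective, hgoal]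
    omega
  simp only [Finset.bind_def, Finset.pure_def, Finset.sup_singleton_apply,
    Finset.filter_image]
  convert key using 3 <;> exact Subsingleton.elim _ _
end
end

section
/- Let G be a realization of a graphic sequence π with a distinguished k-vertex set S, and suppose π is not potentially (K_{k-α} ∨ \overline{K_α})-graphic where α = α(H) and every vertex of G has degree at least k-α. Then the number of vertices w ∈ V(G)∖S with N(w) ⊆ S is at most C(k, k-α)·[2·C(k-α,2) + α - 1]. -/
open SimpleGraph Finset
open scoped Classical

set_option maxHeartbeats 1000000

lemma two_choose (t : ℕ) : 2 * Nat.choose t 2 = t * t - t := by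
  rcases t with _ | t
  · simp
  · rw [Nat.choose_two_right, Nat.succ_sub_one,
      Nat.mul_div_cancel' (by simpa [Nat.mul_comm] using (Nat.even_mul_succ_self t).two_dvd),
      Nat.mul_succ]
    generalize (t+1)*t = x
    omega

lemma switch_exists {V : Type*} [Fintype V] [DecidableEq V] (H : SimpleGraph V) (a b c d : V)
    (hab : H.Adj a b) (hcd : H.Adj c d) (hac : ¬H.Adj a c) (hbd : ¬H.Adj b d)
    (hac' : a ≠ c) (hbd' : b ≠ d) (had : a ≠ d) (hbc : b ≠ c) :
    ∃ H' : SimpleGraph V, (∀ v, H'.degree v = H.degree v) ∧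
      (∀ x y, H'.Adj x y ↔
        ((H.Adj x y ∧ ¬(s(x,y) = s(a,b) ∨ s(x,y) = s(c,d))) ∨
          (s(x,y) = s(a,c) ∨ s(x,y) = s(b,d)))) := by
  have hab' : a ≠ b := hab.ne
  have hcd' : c ≠ d := hcd.ne
  have hba : H.Adj b a := hab.symm
  have hdc : H.Adj d c := hcd.symm
  have hca : ¬H.Adj c a := fun h => hac h.symm
  have hdb : ¬H.Adj d b := fun h => hbd h.symm
  set H' : SimpleGraph V :=
    { Adj := fun x y =>
        ((H.Adj x y ∧ ¬(s(x,y) = s(a,b) ∨ s(x,y) = s(c,d))) ∨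
          (s(x,y) = s(a,c) ∨ s(x,y) = s(b,d)))
      symm := by
        constructor; intro x y h
        have hsw : ∀ u v : V, s(v,u) = s(u,v) := fun u v => Sym2.eq_swap
        rcases h with ⟨h1, h2⟩ | h
        · exact Or.inl ⟨h1.symm, by rwa [hsw]⟩
        · exact Or.inr (by rwa [hsw])
      loopless := by
        constructor; intro x h
        rcases h with ⟨h1, _⟩ | h | h
        · exact H.loopless.irrefl x h1
        · rcases Sym2.eq_iff.mp h with ⟨rfl, rfl⟩ | ⟨rfl, rfl⟩ <;> exact hac' rfl
        · rcases Sym2.eq_iff.mp h with ⟨rfl, rfl⟩ | ⟨rfl, rfl⟩ <;> exact hbd' rfl } with hH'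
  refine ⟨H', ?_, fun x y => Iff.rfl⟩
  have hAdj : ∀ x y, H'.Adj x y ↔
        ((H.Adj x y ∧ ¬(s(x,y) = s(a,b) ∨ s(x,y) = s(c,d))) ∨
          (s(x,y) = s(a,c) ∨ s(x,y) = s(b,d))) := fun x y => Iff.rfl
  intro v
  
  by_cases hva : v = a
  · subst hva
    have hN : H'.neighborFinset v = insert c ((H.neighborFinset v).erase b) := by
      ext y
      simp only [mem_neighborFinset, hAdj, Sym2.eq_iff, mem_insert, mem_erase]
      tauto
    have key : #(H'.neighborFinset v) = #(H.neighborFinset v) := by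
      rw [hN, card_insert_of_notMem (by simp [hac]), card_erase_add_one (by simpa using hab)]
    rw [degree, degree]; convert key using 2 <;> exact Finset.ext fun y => by simp only [mem_neighborFinset]
  by_cases hvb : v = b
  · subst hvb
    have hN : H'.neighborFinset v = insert d ((H.neighborFinset v).erase a) := by
      ext y
      simp only [mem_neighborFinset, hAdj, Sym2.eq_iff, mem_insert, mem_erase]
      tauto
    have key : #(H'.neighborFinset v) = #(H.neighborFinset v) := by
      rw [hN, card_insert_of_notMem (by simp [hbd]), card_erase_add_one (by simpa using hba)]
    rw [degree, degree]; convert key using 2 <;> exact Finset.ext fun y => by simp only [mem_neighborFinset]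
  by_cases hvc : v = c
  · subst hvc
    have hN : H'.neighborFinset v = insert a ((H.neighborFinset v).erase d) := by
      ext y
      simp only [mem_neighborFinset, hAdj, Sym2.eq_iff, mem_insert, mem_erase]
      tauto
    have key : #(H'.neighborFinset v) = #(H.neighborFinset v) := by
      rw [hN, card_insert_of_notMem (by simp [hca]), card_erase_add_one (by simpa using hcd)]
    rw [degree, degree]; convert key using 2 <;> exact Finset.ext fun y => by simp only [mem_neighborFinset]
  by_cases hvd : v = d
  · subst hvd
    have hN : H'.neighborFinset v = insert b ((H.neighborFinset v).erase c) := by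
      ext y
      simp only [mem_neighborFinset, hAdj, Sym2.eq_iff, mem_insert, mem_erase]
      tauto
    have key : #(H'.neighborFinset v) = #(H.neighborFinset v) := by
      rw [hN, card_insert_of_notMem (by simp [hdb]), card_erase_add_one (by simpa using hdc)]
    rw [degree, degree]; convert key using 2 <;> exact Finset.ext fun y => by simp only [mem_neighborFinset]
  have hN : H'.neighborFinset v = H.neighborFinset v := by
    ext y
    simp only [mem_neighborFinset, hAdj, Sym2.eq_iff]
    constructor
    · rintro (⟨h1, _⟩ | h | h)
      · exact h1
      · rcases h with ⟨rfl, rfl⟩ | ⟨rfl, rfl⟩ <;> [exact absurd rfl hva; exact absurd rfl hvc]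
      · rcases h with ⟨rfl, rfl⟩ | ⟨rfl, rfl⟩ <;> [exact absurd rfl hvb; exact absurd rfl hvd]
    · intro h
      refine Or.inl ⟨h, ?_⟩
      rintro ((⟨rfl, rfl⟩ | ⟨rfl, rfl⟩) | (⟨rfl, rfl⟩ | ⟨rfl, rfl⟩))
      · exact hva rfl
      · exact hvb rfl
      · exact hvc rfl
      · exact hvd rfl
  have key : #(H'.neighborFinset v) = #(H.neighborFinset v) := by rw [hN]
  rw [degree, degree]; convert key using 2 <;> exact Finset.ext fun y => by simp only [mem_neighborFinset]


lemma embed_of_clique {n : ℕ} (r s : ℕ) (H : SimpleGraph (Fin n)) (S T W : Finset (Fin n))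
    (hT : T.card = r) (hW : W.card = s) (hTS : T ⊆ S) (hWS : ∀ w ∈ W, w ∉ S)
    (hclique : ∀ x ∈ T, ∀ y ∈ T, x ≠ y → H.Adj x y)
    (hadj : ∀ w ∈ W, ∀ t ∈ T, H.Adj w t) :
    ∃ f : splitGraph r s →g H, Function.Injective f := by
  set tI := T.orderIsoOfFin hT with htI
  set wI := W.orderIsoOfFin hW with hwI
  set f : Fin (r + s) → Fin n :=
    Fin.append (fun i => (tI i : Fin n)) (fun j => (wI j : Fin n)) with hf
  have hcases : ∀ i : Fin (r + s),
      (∃ j : Fin r, i = Fin.castAdd s j) ∨ (∃ j : Fin s, i = Fin.natAdd r j) := by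
    intro i
    rcases lt_or_ge (i : ℕ) r with h | h
    · exact Or.inl ⟨⟨i, h⟩, by ext; simp⟩
    · refine Or.inr ⟨⟨(i : ℕ) - r, by have := i.isLt; omega⟩, by ext; simp [Fin.natAdd]; omega⟩
  have hfl : ∀ j : Fin r, f (Fin.castAdd s j) = (tI j : Fin n) := fun j => Fin.append_left _ _ j
  have hfr : ∀ j : Fin s, f (Fin.natAdd r j) = (wI j : Fin n) := fun j => Fin.append_right _ _ j
  have htmem : ∀ j : Fin r, (tI j : Fin n) ∈ T := fun j => (tI j).2
  have hwmem : ∀ j : Fin s, (wI j : Fin n) ∈ W := fun j => (wI j).2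
  have htne : ∀ j j' : Fin r, j ≠ j' → (tI j : Fin n) ≠ (tI j' : Fin n) := by
    intro j j' hne h
    exact hne (tI.injective (Subtype.ext h))
  have hwne : ∀ j j' : Fin s, j ≠ j' → (wI j : Fin n) ≠ (wI j' : Fin n) := by
    intro j j' hne h
    exact hne (wI.injective (Subtype.ext h))
  have htw : ∀ (j : Fin r) (j' : Fin s), (tI j : Fin n) ≠ (wI j' : Fin n) := by
    intro j j' h
    exact hWS _ (hwmem j') (h ▸ hTS (htmem j))
  refine ⟨⟨f, ?_⟩, ?_⟩
  · intro a b hab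
    rw [splitGraph, fromRel_adj] at hab
    obtain ⟨hne, hlt⟩ := hab
    rcases hcases a with ⟨i, rfl⟩ | ⟨i, rfl⟩ <;> rcases hcases b with ⟨j, rfl⟩ | ⟨j, rfl⟩
    · rw [hfl, hfl]
      refine hclique _ (htmem i) _ (htmem j) (htne i j ?_)
      rintro rfl; exact hne rfl
    · rw [hfl, hfr]
      exact (hadj _ (hwmem j) _ (htmem i)).symm
    · rw [hfr, hfl]
      exact hadj _ (hwmem i) _ (htmem j)
    · exfalso
      simp only [Fin.coe_natAdd] at hlt
      omega
  · intro a b hab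
    replace hab : f a = f b := hab
    rcases hcases a with ⟨i, rfl⟩ | ⟨i, rfl⟩ <;> rcases hcases b with ⟨j, rfl⟩ | ⟨j, rfl⟩
    · rw [hfl, hfl] at hab
      have : i = j := tI.injective (Subtype.ext hab)
      rw [this]
    · rw [hfl, hfr] at hab
      exact absurd hab (htw i j)
    · rw [hfr, hfl] at hab
      exact absurd hab.symm (htw j i)
    · rw [hfr, hfr] at hab
      have : i = j := wI.injective (Subtype.ext hab)
      rw [this]


lemma key_lemma {n : ℕ} (r α : ℕ) (hα : 1 ≤ α) (S : Finset (Fin n)) :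
    ∀ m : ℕ, ∀ (H : SimpleGraph (Fin n)) (T W' : Finset (Fin n)),
    T.card = r → T ⊆ S →
    ((T ×ˢ T).filter fun p => p.1 ≠ p.2 ∧ ¬ H.Adj p.1 p.2).card = m →
    m + α ≤ W'.card →
    (∀ w ∈ W', w ∉ S ∧ (∀ t ∈ T, H.Adj w t) ∧ ∀ x, H.Adj w x → x ∈ S) →
    ∃ H' : SimpleGraph (Fin n), (∀ v, H'.degree v = H.degree v) ∧
      ∃ f : splitGraph r α →g H', Function.Injective f := by
  intro m
  induction m using Nat.strong_induction_on with
  | _ m IH =>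
    intro H T W' hT hTS hm hcard hW'
    rcases Nat.eq_zero_or_pos m with rfl | hmpos
    · -- base case: T is a clique in H
      have hclique : ∀ x ∈ T, ∀ y ∈ T, x ≠ y → H.Adj x y := by
        intro x hx y hy hxy
        by_contra hadj
        have : (x, y) ∈ (T ×ˢ T).filter fun p => p.1 ≠ p.2 ∧ ¬ H.Adj p.1 p.2 := by
          simp [mem_product, hx, hy, hxy, hadj]
        rw [card_eq_zero] at hm
        simp [hm] at this
      obtain ⟨W, hWsub, hWcard⟩ := Finset.exists_subset_card_eq (by omega : α ≤ W'.card)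
      obtain ⟨f, hf⟩ := embed_of_clique r α H S T W hT hWcard hTS
        (fun w hw => (hW' w (hWsub hw)).1)
        hclique
        (fun w hw t ht => (hW' w (hWsub hw)).2.1 t ht)
      exact ⟨H, fun _ => rfl, f, hf⟩
    · -- inductive step
      obtain ⟨⟨u, v⟩, hp⟩ : ((T ×ˢ T).filter fun p => p.1 ≠ p.2 ∧ ¬ H.Adj p.1 p.2).Nonempty := by
        rw [← card_pos, hm]; exact hmpos
      rw [mem_filter, mem_product] at hp
      obtain ⟨⟨hu, hv⟩, huv, hnadj⟩ := hp
      have hvu : (v, u) ∈ (T ×ˢ T).filter fun p => p.1 ≠ p.2 ∧ ¬ H.Adj p.1 p.2 := by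
        simp only [mem_filter, mem_product]
        exact ⟨⟨hv, hu⟩, huv.symm, fun h => hnadj h.symm⟩
      have huv' : (u, v) ∈ (T ×ˢ T).filter fun p => p.1 ≠ p.2 ∧ ¬ H.Adj p.1 p.2 := by
        simp only [mem_filter, mem_product]
        exact ⟨⟨hu, hv⟩, huv, hnadj⟩
      have hm2 : 2 ≤ m := by
        rw [← hm]
        have hsub : {(u, v), (v, u)} ⊆ (T ×ˢ T).filter fun p => p.1 ≠ p.2 ∧ ¬ H.Adj p.1 p.2 := by
          intro p hp
          simp only [mem_insert, mem_singleton] at hp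
          rcases hp with rfl | rfl
          · exact huv'
          · exact hvu
        have : ({(u, v), (v, u)} : Finset ((Fin n) × (Fin n))).card = 2 := by
          rw [card_insert_of_notMem (by simp [Prod.ext_iff]; exact fun h => absurd h huv), card_singleton]
        have := card_le_card hsub
        omega
      -- pick two vertices from W'
      have hW'2 : 2 ≤ W'.card := by omega
      obtain ⟨w1, hw1⟩ : W'.Nonempty := card_pos.mp (by omega)
      obtain ⟨w2, hw2⟩ : (W'.erase w1).Nonempty := by
        rw [← card_pos, card_erase_of_mem hw1]; omega
      have hw2W : w2 ∈ W' := mem_of_mem_erase hw2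
      have hw12 : w2 ≠ w1 := ne_of_mem_erase hw2
      obtain ⟨hw1S, hw1adj, hw1nb⟩ := hW' w1 hw1
      obtain ⟨hw2S, hw2adj, hw2nb⟩ := hW' w2 hw2W
      have huS : u ∈ S := hTS hu
      have hvS : v ∈ S := hTS hv
      -- the switch : a = u, b = w1, c = v, d = w2
      have hadj_uw1 : H.Adj u w1 := (hw1adj u hu).symm
      have hadj_vw2 : H.Adj v w2 := (hw2adj v hv).symm
      have hnadj_w12 : ¬ H.Adj w1 w2 := fun h => hw2S (hw1nb w2 h)
      obtain ⟨H', hdeg, hadj⟩ := switch_exists H u w1 v w2 hadj_uw1 hadj_vw2 hnadj hnadj_w12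
        huv hw12.symm (fun h => hw2S (h ▸ huS)) (fun h => hw1S (h ▸ hvS))
      -- facts for membership analysis
      have hne_uw1 : u ≠ w1 := fun h => hw1S (h ▸ huS)
      have hne_vw2 : v ≠ w2 := fun h => hw2S (h ▸ hvS)
      -- new non-adjacency set
      have hfilter : ((T ×ˢ T).filter fun p => p.1 ≠ p.2 ∧ ¬ H'.Adj p.1 p.2) =
          (((T ×ˢ T).filter fun p => p.1 ≠ p.2 ∧ ¬ H.Adj p.1 p.2).erase (u, v)).erase (v, u) := by
        ext ⟨x, y⟩
        simp only [mem_filter, mem_product, mem_erase, Prod.mk.injEq, ne_eq, Prod.ext_iff]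
        constructor
        · rintro ⟨⟨hx, hy⟩, hxy, hnadj'⟩
          have hxS : x ∈ S := hTS hx
          have hyS : y ∈ S := hTS hy
          refine ⟨?_, ?_, ⟨hx, hy⟩, hxy, ?_⟩
          · rintro ⟨rfl, rfl⟩
            exact hnadj' ((hadj x y).mpr (Or.inr (Or.inl (Sym2.eq_swap))))
          · rintro ⟨rfl, rfl⟩
            exact hnadj' ((hadj x y).mpr (Or.inr (Or.inl rfl)))
          · intro hxy'
            refine hnadj' ((hadj x y).mpr (Or.inl ⟨hxy', ?_⟩))
            rintro (h | h) <;> rcases Sym2.eq_iff.mp h with ⟨rfl, rfl⟩ | ⟨rfl, rfl⟩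
            · exact hw1S hyS
            · exact hw1S hxS
            · exact hw2S hyS
            · exact hw2S hxS
        · rintro ⟨hne1, hne2, ⟨hx, hy⟩, hxy, hnadj'⟩
          have hxS : x ∈ S := hTS hx
          have hyS : y ∈ S := hTS hy
          refine ⟨⟨hx, hy⟩, hxy, ?_⟩
          intro hadj'
          rcases (hadj x y).mp hadj' with ⟨h1, _⟩ | h | h
          · exact hnadj' h1
          · rcases Sym2.eq_iff.mp h with ⟨rfl, rfl⟩ | ⟨rfl, rfl⟩
            · exact hne2 ⟨rfl, rfl⟩
            · exact hne1 ⟨rfl, rfl⟩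
          · rcases Sym2.eq_iff.mp h with ⟨rfl, rfl⟩ | ⟨rfl, rfl⟩
            · exact hw1S hxS
            · exact hw2S hxS
      have hmcard : ((T ×ˢ T).filter fun p => p.1 ≠ p.2 ∧ ¬ H'.Adj p.1 p.2).card = m - 2 := by
        rw [hfilter, card_erase_of_mem (mem_erase.mpr
          ⟨by intro h; exact huv (congrArg Prod.fst h).symm, hvu⟩), card_erase_of_mem huv', hm]
        omega
      -- new W
      set W'' := (W'.erase w1).erase w2 with hW''def
      have hW''card : W''.card = W'.card - 2 := by
        rw [hW''def, card_erase_of_mem hw2, card_erase_of_mem hw1]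
        omega
      have hW''mem : ∀ w ∈ W'', w ∈ W' ∧ w ≠ w1 ∧ w ≠ w2 := by
        intro w hw
        exact ⟨mem_of_mem_erase (mem_of_mem_erase hw),
          ne_of_mem_erase (mem_of_mem_erase hw), ne_of_mem_erase hw⟩
      have hW''prop : ∀ w ∈ W'', w ∉ S ∧ (∀ t ∈ T, H'.Adj w t) ∧ ∀ x, H'.Adj w x → x ∈ S := by
        intro w hw
        obtain ⟨hwW', hww1, hww2⟩ := hW''mem w hw
        obtain ⟨hwS, hwadj, hwnb⟩ := hW' w hwW'
        refine ⟨hwS, ?_, ?_⟩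
        · intro t ht
          have htS : t ∈ S := hTS ht
          refine (hadj w t).mpr (Or.inl ⟨hwadj t ht, ?_⟩)
          rintro (h | h) <;> rcases Sym2.eq_iff.mp h with ⟨rfl, rfl⟩ | ⟨rfl, rfl⟩
          · exact hwS huS
          · exact hww1 rfl
          · exact hwS hvS
          · exact hww2 rfl
        · intro x hx
          rcases (hadj w x).mp hx with ⟨h1, _⟩ | h | h
          · exact hwnb x h1
          · rcases Sym2.eq_iff.mp h with ⟨rfl, rfl⟩ | ⟨rfl, rfl⟩
            · exact absurd huS hwS
            · exact absurd hvS hwS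
          · rcases Sym2.eq_iff.mp h with ⟨rfl, rfl⟩ | ⟨rfl, rfl⟩
            · exact absurd rfl hww1
            · exact absurd rfl hww2
      obtain ⟨H'', hdeg'', f, hf⟩ := IH (m - 2) (by omega) H' T W'' hT hTS hmcard
        (by omega) hW''prop
      exact ⟨H'', fun v' => (hdeg'' v').trans (hdeg v'), f, hf⟩


/-- let `G` be a realization of a graphic sequence with a
distinguished `k`-vertex set `S`; suppose the degree sequence of `G` is not
potentially `K_{k-α} ∨ K̄_α`-graphic and every vertex of `G` has degree at
least `k - α`.  Then the number of vertices `w ∉ S` with `N(w) ⊆ S` is at most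
`C(k, k-α)·(2·C(k-α,2) + α - 1)`. -/
theorem stmt9 (n k α : ℕ) (hα : 1 ≤ α) (hαk : α ≤ k)
    (G : SimpleGraph (Fin n)) (S : Finset (Fin n)) (hS : S.card = k)
    (hmin : ∀ v, k - α ≤ G.degree v)
    (hnot : ¬ ∃ G' : SimpleGraph (Fin n), (∀ v, G'.degree v = G.degree v) ∧
      ∃ f : splitGraph (k - α) α →g G', Function.Injective f) :
    (Finset.univ.filter
        (fun w : Fin n => w ∉ S ∧ G.neighborFinset w ⊆ S)).card ≤
      Nat.choose k (k - α) * (2 * Nat.choose (k - α) 2 + α - 1) := by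
  by_contra hcon
  push_neg at hcon
  set W : Finset (Fin n) := Finset.univ.filter
    (fun w : Fin n => w ∉ S ∧ G.neighborFinset w ⊆ S) with hWdef
  have hWmem : ∀ w ∈ W, w ∉ S ∧ G.neighborFinset w ⊆ S := by
    intro w hw
    rw [hWdef, mem_filter] at hw
    exact hw.2
  -- choose a (k-α)-subset of each neighborhood
  have hchoice : ∀ w ∈ W, ∃ B ⊆ G.neighborFinset w, B.card = k - α := by
    intro w _
    exact Finset.exists_subset_card_eq (by rw [← degree]; exact hmin w)
  set F : Fin n → Finset (Fin n) := fun w =>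
    if h : w ∈ W then (hchoice w h).choose else ∅ with hFdef
  have hFspec : ∀ w ∈ W, F w ⊆ G.neighborFinset w ∧ (F w).card = k - α := by
    intro w hw
    rw [hFdef]
    simp only [hw, dif_pos]
    exact ⟨(hchoice w hw).choose_spec.1, (hchoice w hw).choose_spec.2⟩
  have hmaps : ∀ w ∈ W, F w ∈ S.powersetCard (k - α) := by
    intro w hw
    rw [mem_powersetCard]
    exact ⟨(hFspec w hw).1.trans (hWmem w hw).2, (hFspec w hw).2⟩
  have hpow : (S.powersetCard (k - α)).card = Nat.choose k (k - α) := by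
    rw [card_powersetCard, hS]
  obtain ⟨T, hTmem, hTbig⟩ := Finset.exists_lt_card_fiber_of_mul_lt_card_of_maps_to hmaps
    (by rw [hpow]; exact hcon)
  rw [mem_powersetCard] at hTmem
  obtain ⟨hTS, hTcard⟩ := hTmem
  set W' : Finset (Fin n) := W.filter (fun w => F w = T) with hW'def
  have hW'mem : ∀ w ∈ W', w ∉ S ∧ (∀ t ∈ T, G.Adj w t) ∧ ∀ x, G.Adj w x → x ∈ S := by
    intro w hw
    rw [hW'def, mem_filter] at hw
    obtain ⟨hwW, hwT⟩ := hw
    obtain ⟨hwS, hwnb⟩ := hWmem w hwW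
    refine ⟨hwS, ?_, ?_⟩
    · intro t ht
      have : t ∈ G.neighborFinset w := (hFspec w hwW).1 (hwT ▸ ht)
      rwa [mem_neighborFinset] at this
    · intro x hx
      exact hwnb (by rwa [mem_neighborFinset])
  -- bound on the number of non-adjacent pairs in T
  have hbound : ((T ×ˢ T).filter fun p => p.1 ≠ p.2 ∧ ¬ G.Adj p.1 p.2).card ≤
      2 * Nat.choose (k - α) 2 := by
    have hsub : ((T ×ˢ T).filter fun p => p.1 ≠ p.2 ∧ ¬ G.Adj p.1 p.2) ⊆ T.offDiag := by
      intro p hp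
      rw [mem_filter, mem_product] at hp
      rw [mem_offDiag]
      exact ⟨hp.1.1, hp.1.2, hp.2.1⟩
    have := card_le_card hsub
    rw [offDiag_card, hTcard] at this
    rw [two_choose]
    exact this
  have hW'card : ((T ×ˢ T).filter fun p => p.1 ≠ p.2 ∧ ¬ G.Adj p.1 p.2).card + α ≤
      W'.card := by
    have h1 : 2 * Nat.choose (k - α) 2 + α - 1 < W'.card := hTbig
    omega
  exact hnot (key_lemma (k - α) α hα S _ G T W' hTcard hTS rfl hW'card hW'mem)
end
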